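/- Let L0 and L1 be relational languages and, for each t < 2, let K_t be a class of finite L_t-structures closed under isomorphism with the hereditary property. For all n ≥ 2, if K0 and K1 have the disjoint n-amalgamation property, then the free superposition K0 * K1 has the disjoint n-amalgamation property. -/
import Mathlib


/- Definitions following "Products of Classes of Finite Structures"
   (Guingona, Parnes, Scow). -/

open CategoryTheory FirstOrder FirstOrder.Language FirstOrder.Language.Structure

universe u v w w' u0 v0 u1 v1

namespace ProductsPaper

instance graphIsRelational : Language.graph.IsRelational :=
  fun _ => inferInstanceAs (IsEmpty Empty)

/-- The induced structure on a subset, for a relational language. -/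
instance setStructure (L : FirstOrder.Language.{u, v}) [L.IsRelational] {M : Type w}
    [L.Structure M] (s : Set M) : L.Structure s where
  funMap f _ := isEmptyElim f
  RelMap R x := RelMap R fun i => (x i : M)

/-- A class of structures: a set of bundled structures (with universes in `Type 0`). -/
abbrev StructClass (L : FirstOrder.Language.{u, v}) := Set (Bundled.{0} L.Structure)

variable {L : FirstOrder.Language.{u, v}}

/-- Every member of the class is finite. -/
def AllFinite (K : StructClass L) : Prop := ∀ A ∈ K, Finite A

/-- The class is closed under isomorphism. -/
def IsoClosed (K : StructClass L) : Prop :=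
  ∀ A ∈ K, ∀ B : Bundled.{0} L.Structure, Nonempty (A ≃[L] B) → B ∈ K

/-- The class `K` is indivisible: for every `A ∈ K` and `k ≥ 2` there is `B ∈ K` such that
every `k`-coloring of `B` admits a monochromatic embedded copy of `A`. -/
def Indivisible (K : StructClass L) : Prop :=
  ∀ A ∈ K, ∀ k : ℕ, 2 ≤ k → ∃ B ∈ K, ∀ c : B → Fin k,
    ∃ f : A ↪[L] B, ∃ i : Fin k, ∀ a : A, c (f a) = i

/-- The joint embedding property. -/
def JEP (K : StructClass L) : Prop :=
  ∀ A ∈ K, ∀ B ∈ K, ∃ C ∈ K, Nonempty (A ↪[L] C) ∧ Nonempty (B ↪[L] C)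

/-- The amalgamation property. -/
def AP (K : StructClass L) : Prop :=
  ∀ (A B₀ B₁ : Bundled.{0} L.Structure), A ∈ K → B₀ ∈ K → B₁ ∈ K →
    ∀ (f₀ : A ↪[L] B₀) (f₁ : A ↪[L] B₁),
      ∃ C ∈ K, ∃ (g₀ : B₀ ↪[L] C) (g₁ : B₁ ↪[L] C), g₀.comp f₀ = g₁.comp f₁

/-- The strong (disjoint) amalgamation property. -/
def SAP (K : StructClass L) : Prop :=
  ∀ (A B₀ B₁ : Bundled.{0} L.Structure), A ∈ K → B₀ ∈ K → B₁ ∈ K →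
    ∀ (f₀ : A ↪[L] B₀) (f₁ : A ↪[L] B₁),
      ∃ C ∈ K, ∃ (g₀ : B₀ ↪[L] C) (g₁ : B₁ ↪[L] C), g₀.comp f₀ = g₁.comp f₁ ∧
        Set.range g₀ ∩ Set.range g₁ = Set.range (g₀.comp f₀)

/-- The hereditary property: every substructure (equivalently, subset, since the language is
relational) of a member of the class is a member of the class. -/
def HereditaryC [L.IsRelational] (K : StructClass L) : Prop :=
  ∀ A ∈ K, ∀ s : Set A, (⟨s, setStructure L s⟩ : Bundled.{0} L.Structure) ∈ K

/-- The age of a structure: the class of all finite structures embeddable in it. -/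
def ageC (L : FirstOrder.Language.{u, v}) (M : Type w) [L.Structure M] : StructClass L :=
  {A | Finite A ∧ Nonempty (A ↪[L] M)}

/-- The proper subsets of `{0, …, n-1}`, indexing a disjoint amalgamation problem. -/
abbrev ProperSub (n : ℕ) := {p : Finset (Fin n) // p ≠ Finset.univ}

lemma inter_ne_univ {n : ℕ} (p q : ProperSub n) : p.1 ∩ q.1 ≠ Finset.univ := by
  intro h
  apply p.2
  apply Finset.eq_univ_of_forall
  intro x
  have hx : x ∈ p.1 ∩ q.1 := by rw [h]; exact Finset.mem_univ x
  exact (Finset.mem_inter.mp hx).1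

/-- The intersection of two proper subsets of `Fin n`, as a proper subset. -/
def interP {n : ℕ} (p q : ProperSub n) : ProperSub n := ⟨p.1 ∩ q.1, inter_ne_univ p q⟩

/-- The disjoint `n`-amalgamation property: every disjoint amalgamation system indexed by the
proper subsets of `{0, …, n-1}` extends to a disjoint amalgamation system indexed by all
subsets of `{0, …, n-1}`, i.e., it admits a top structure `C ∈ K` together with embeddings
commuting with the given system and satisfying the disjointness condition. -/
def DisjointNAmalg (K : StructClass L) (n : ℕ) : Prop :=
  ∀ (A : ProperSub n → Bundled.{0} L.Structure)
    (f : ∀ p q : ProperSub n, p.1 ⊆ q.1 → (A p ↪[L] A q)),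
    (∀ p, A p ∈ K) →
    (∀ (p : ProperSub n) (h : p.1 ⊆ p.1), f p p h = Embedding.refl L (A p)) →
    (∀ (p q r : ProperSub n) (hpq : p.1 ⊆ q.1) (hqr : q.1 ⊆ r.1),
      f p r (hpq.trans hqr) = (f q r hqr).comp (f p q hpq)) →
    (∀ (p q r : ProperSub n) (hpr : p.1 ⊆ r.1) (hqr : q.1 ⊆ r.1),
      Set.range (f p r hpr) ∩ Set.range (f q r hqr)
        = Set.range (f (interP p q) r (Finset.inter_subset_left.trans hpr))) →
    ∃ C ∈ K, ∃ g : ∀ p : ProperSub n, A p ↪[L] C,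
      (∀ (p q : ProperSub n) (hpq : p.1 ⊆ q.1), (g q).comp (f p q hpq) = g p) ∧
      (∀ p q : ProperSub n,
        Set.range (g p) ∩ Set.range (g q) = Set.range (g (interP p q)))

section DSS

variable (L) [L.IsRelational]

/-- `qfClassSet L C0 c` is the set of elements `c'` such that the map fixing `C0`
pointwise and sending `c` to `c'` is an isomorphism from `C0 ∪ {c}` onto `C0 ∪ {c'}`. -/
def qfClassSet {C : Type w} [L.Structure C] (C0 : Set C) (c : C) : Set C :=
  {c' | c' ∉ C0 ∧ ∀ ⦃m : ℕ⦄ (R : L.Relations m) (x x' : Fin m → C),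
    (∀ i, (x i = c ∧ x' i = c') ∨ (x i ∈ C0 ∧ x' i = x i)) →
    (RelMap R x ↔ RelMap R x')}

/-- A class of structures is definably self-similar. -/
def DefinablySelfSimilar (K : StructClass L) : Prop :=
  ∀ A B C : Bundled.{0} L.Structure, A ∈ K → B ∈ K → C ∈ K →
    ∀ (f : A ↪[L] B) (C0 : Set C) (c : C), c ∉ C0 →
    ∀ g : A ↪[L] (qfClassSet L C0 c), ∃ D ∈ K, ∃ (j : C ↪[L] D)
      (h : B ↪[L] (qfClassSet L (⇑j '' C0) (j c))),
      ∀ a : A, (h (f a) : D) = j (g a : C)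

end DSS

/-- The class `K` has exactly one singleton structure up to isomorphism. -/
def UniqueSingleton (K : StructClass L) : Prop :=
  (∃ A ∈ K, Nonempty A ∧ Subsingleton A) ∧
  (∀ A B : Bundled.{0} L.Structure, A ∈ K → B ∈ K →
    Nonempty A → Subsingleton A → Nonempty B → Subsingleton B → Nonempty (A ≃[L] B))

/-- Ultrahomogeneity: every embedding of a finite substructure extends to an automorphism. -/
def Ultrahomogeneous (L : FirstOrder.Language.{u, v}) [L.IsRelational] (M : Type w)
    [L.Structure M] : Prop :=
  ∀ s : Set M, s.Finite → ∀ f : s ↪[L] M, ∃ g : M ≃[L] M, ∀ x : s, g x = f x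

/-- The class has countably many structures up to isomorphism. -/
def EssentiallyCountable (K : StructClass L) : Prop :=
  ∃ S : StructClass L, S.Countable ∧ ∀ A ∈ K, ∃ B ∈ S, Nonempty (A ≃[L] B)

/-- A Fraïssé class: nonempty, countably many members up to isomorphism, hereditary,
with the joint embedding and amalgamation properties. -/
def FraisseClass [L.IsRelational] (K : StructClass L) : Prop :=
  K.Nonempty ∧ EssentiallyCountable K ∧ HereditaryC K ∧ JEP K ∧ AP K

/-- `M` is a Fraïssé limit of the class `K`: countable, ultrahomogeneous, with age `K`. -/
def IsFraisseLimitC [L.IsRelational] (K : StructClass L) (M : Type w) [L.Structure M] : Prop :=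
  Countable M ∧ Ultrahomogeneous L M ∧ ageC L M = K

variable {L0 : FirstOrder.Language.{u0, v0}} {L1 : FirstOrder.Language.{u1, v1}}

/-- The language of the lexicographic product: the disjoint union of the two languages plus a
new binary relation symbol `E` (the unique relation symbol of `Language.graph`). -/
def lexLang (L0 : FirstOrder.Language.{u0, v0}) (L1 : FirstOrder.Language.{u1, v1}) :
    FirstOrder.Language :=
  (L0.sum L1).sum Language.graph

/-- The language of the full product: the disjoint union of the two languages plus two
new binary relation symbols `E0` and `E1`. -/
def fullLang (L0 : FirstOrder.Language.{u0, v0}) (L1 : FirstOrder.Language.{u1, v1}) :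
    FirstOrder.Language :=
  (L0.sum L1).sum (Language.graph.sum Language.graph)


instance lexLangIsRelational [L0.IsRelational] [L1.IsRelational] :
    (lexLang L0 L1).IsRelational :=
  inferInstanceAs (((L0.sum L1).sum Language.graph).IsRelational)

instance fullLangIsRelational [L0.IsRelational] [L1.IsRelational] :
    (fullLang L0 L1).IsRelational :=
  inferInstanceAs (((L0.sum L1).sum (Language.graph.sum Language.graph)).IsRelational)

section Products

variable [L0.IsRelational] [L1.IsRelational]

/-- Interpretation of `L0` on a lexicographic product. -/
def lexStr0 {B : Type w} (A : B → Type w') [∀ b, L0.Structure (A b)] :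
    L0.Structure (Σ b, A b) where
  funMap f _ := isEmptyElim f
  RelMap {n} R x := ∃ (b : B) (a : Fin n → A b), (∀ i, x i = ⟨b, a i⟩) ∧ RelMap R a

/-- Interpretation of `L1` on a lexicographic product. -/
def lexStr1 {B : Type w} [L1.Structure B] (A : B → Type w') :
    L1.Structure (Σ b, A b) where
  funMap f _ := isEmptyElim f
  RelMap R x := RelMap R fun i => (x i).1

/-- Interpretation of the extra binary relation `E` on a lexicographic product. -/
def lexStrE {B : Type w} (A : B → Type w') : Language.graph.Structure (Σ b, A b) where
  funMap f _ := isEmptyElim f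
  RelMap {n} R := match n, R with
    | _, .adj => fun x => (x 0).1 = (x 1).1

/-- The lexicographic product of the structures `A b` along `B`. -/
def lexStr {B : Type w} [L1.Structure B] (A : B → Type w') [∀ b, L0.Structure (A b)] :
    (lexLang L0 L1).Structure (Σ b, A b) :=
  @Language.sumStructure _ _ _
    (@Language.sumStructure _ _ _ (lexStr0 A) (lexStr1 A)) (lexStrE A)

/-- The lexicographic product `A ≀ B` of two structures (as a type). -/
def lexProd (L0 : FirstOrder.Language.{u0, v0}) (L1 : FirstOrder.Language.{u1, v1})
    (A : Type w) (B : Type w') : Type max w w' :=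
  Σ _ : B, A

instance lexProdStr (A : Type w) (B : Type w') [L0.Structure A] [L1.Structure B] :
    (lexLang L0 L1).Structure (lexProd L0 L1 A B) :=
  lexStr fun _ : B => A

/-- The lexicographic product of a family of bundled structures along a bundled structure. -/
def lexBundle (B : Bundled.{0} L1.Structure) (A : B → Bundled.{0} L0.Structure) :
    Bundled.{0} (lexLang L0 L1).Structure :=
  ⟨Σ b : B, A b, lexStr fun b => (A b : Type)⟩

/-- The lexicographic product of two classes of structures. -/
def lexClass (K0 : StructClass L0) (K1 : StructClass L1) : StructClass (lexLang L0 L1) :=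
  {C | ∃ B ∈ K1, ∃ A : B → Bundled.{0} L0.Structure, (∀ b, A b ∈ K0) ∧
    Nonempty (C ≃[lexLang L0 L1] lexBundle B A)}

/-- Interpretation of `L0` on a full product. -/
def fullStr0 (A : Type w) (B : Type w') [L0.Structure A] : L0.Structure (A × B) where
  funMap f _ := isEmptyElim f
  RelMap R x := RelMap R fun i => (x i).1

/-- Interpretation of `L1` on a full product. -/
def fullStr1 (A : Type w) (B : Type w') [L1.Structure B] : L1.Structure (A × B) where
  funMap f _ := isEmptyElim f
  RelMap R x := RelMap R fun i => (x i).2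

/-- Interpretation of `E0` on a full product. -/
def fullStrE0 (A : Type w) (B : Type w') : Language.graph.Structure (A × B) where
  funMap f _ := isEmptyElim f
  RelMap {n} R := match n, R with
    | _, .adj => fun x => (x 0).1 = (x 1).1

/-- Interpretation of `E1` on a full product. -/
def fullStrE1 (A : Type w) (B : Type w') : Language.graph.Structure (A × B) where
  funMap f _ := isEmptyElim f
  RelMap {n} R := match n, R with
    | _, .adj => fun x => (x 0).2 = (x 1).2

/-- The full product `A ⊠ B` of two structures, as a structure on `A × B`. -/
def fullStr (A : Type w) (B : Type w') [L0.Structure A] [L1.Structure B] :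
    (fullLang L0 L1).Structure (A × B) :=
  @Language.sumStructure _ _ _
    (@Language.sumStructure _ _ _ (fullStr0 A B) (fullStr1 A B))
    (@Language.sumStructure _ _ _ (fullStrE0 A B) (fullStrE1 A B))

/-- The full product `A ⊠ B` of two structures (as a type). -/
def fullProd (L0 : FirstOrder.Language.{u0, v0}) (L1 : FirstOrder.Language.{u1, v1})
    (A : Type w) (B : Type w') : Type max w w' :=
  A × B

instance fullProdStr (A : Type w) (B : Type w') [L0.Structure A] [L1.Structure B] :
    (fullLang L0 L1).Structure (fullProd L0 L1 A B) :=
  fullStr A B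

/-- The full product of two bundled structures. -/
def fullBundle (A : Bundled.{0} L0.Structure) (B : Bundled.{0} L1.Structure) :
    Bundled.{0} (fullLang L0 L1).Structure :=
  ⟨A × B, fullStr A B⟩

/-- The full product of two classes of structures. -/
def fullClass (K0 : StructClass L0) (K1 : StructClass L1) : StructClass (fullLang L0 L1) :=
  {C | Finite C ∧ ∃ A ∈ K0, ∃ B ∈ K1, Nonempty (C ↪[fullLang L0 L1] fullBundle A B)}

end Products

/-- The free superposition of two classes of structures: all finite structures in the disjoint
union language whose reducts to the two languages lie in the respective classes. -/
def freeClass (K0 : StructClass L0) (K1 : StructClass L1) : StructClass (L0.sum L1) :=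
  {C | Finite C ∧
    (⟨C, (LHom.sumInl (L := L0) (L' := L1)).reduct C⟩ : Bundled.{0} L0.Structure) ∈ K0 ∧
    (⟨C, (LHom.sumInr (L := L0) (L' := L1)).reduct C⟩ : Bundled.{0} L1.Structure) ∈ K1}

/-- A configuration of the class `K` into `M^n`: an interpretation of the relation symbols of
`L0` as `L`-formulas with parameters from `M`, together with maps `f_A : A → M^n` for `A ∈ K`,
such that each relation of each `A ∈ K` is defined by the corresponding formula. -/
structure Config (L0 : FirstOrder.Language.{u0, v0}) (K : StructClass L0)
    (L : FirstOrder.Language.{u, v}) (M : Type w) [L.Structure M] (n : ℕ) where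
  I : ∀ {m : ℕ}, L0.Relations m → L.Formula ((Fin m × Fin n) ⊕ M)
  f : ∀ (A : Bundled.{0} L0.Structure), A ∈ K → A → Fin n → M
  compat : ∀ (A : Bundled.{0} L0.Structure) (hA : A ∈ K) {m : ℕ} (R : L0.Relations m)
      (a : Fin m → A),
    RelMap R a ↔ (I R).Realize (Sum.elim (fun p => f A hA (a p.1) p.2) id)

/-- A configuration is injective if all the maps `f_A` are injective. -/
def Config.Injective {K : StructClass L0} {L : FirstOrder.Language.{u, v}} {M : Type w}
    [L.Structure M] {n : ℕ} (c : Config L0 K L M n) : Prop :=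
  ∀ (A : Bundled.{0} L0.Structure) (hA : A ∈ K), Function.Injective (c.f A hA)

/-- A complete theory `T` admits a `K`-configuration if some model of `T` admits a
`K`-configuration into some finite power. -/
def AdmitsConfig (K : StructClass L0) {L : FirstOrder.Language.{u, v}} (T : L.Theory) : Prop :=
  ∃ (M : Type max u v) (_ : L.Structure M), M ⊨ T ∧ ∃ n : ℕ, Nonempty (Config L0 K L M n)

/-- `T` has an infinite model. -/
def HasInfiniteModel {L : FirstOrder.Language.{u, v}} (T : L.Theory) : Prop :=
  ∃ (M : Type max u v) (_ : L.Structure M), M ⊨ T ∧ Infinite M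

/-- The binary relation of a `Language.graph`-structure. -/
def rel2 {M : Type w} [Language.graph.Structure M] (x y : M) : Prop :=
  RelMap Language.adj ![x, y]

/-- The class of all finite strict partial orders. -/
def POClass : StructClass Language.graph :=
  {A | Finite A ∧ (∀ x : A, ¬ rel2 x x) ∧ ∀ x y z : A, rel2 x y → rel2 y z → rel2 x z}

/-- The class of all finite tournaments. -/
def TournClass : StructClass Language.graph :=
  {A | Finite A ∧ (∀ x : A, ¬ rel2 x x) ∧ ∀ x y : A, x ≠ y → Xor' (rel2 x y) (rel2 y x)}

/-- The class of all finite directed graphs. -/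
def DGClass : StructClass Language.graph :=
  {A | Finite A ∧ ∀ x : A, ¬ rel2 x x}

/-- The class of all finite (simple) graphs. -/
def GClass : StructClass Language.graph :=
  {A | Finite A ∧ (∀ x : A, ¬ rel2 x x) ∧ ∀ x y : A, rel2 x y → rel2 y x}

section Stmt3Proof

variable {L0 : FirstOrder.Language.{u0, v0}} {L1 : FirstOrder.Language.{u1, v1}}
variable [L0.IsRelational] [L1.IsRelational]

/-- The `L0`-reduct of a bundled `(L0.sum L1)`-structure. -/
def red0 (C : Bundled.{0} (L0.sum L1).Structure) : Bundled.{0} L0.Structure :=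
  ⟨C, (LHom.sumInl (L := L0) (L' := L1)).reduct C⟩

/-- The `L1`-reduct of a bundled `(L0.sum L1)`-structure. -/
def red1 (C : Bundled.{0} (L0.sum L1).Structure) : Bundled.{0} L1.Structure :=
  ⟨C, (LHom.sumInr (L := L0) (L' := L1)).reduct C⟩

/-- Reduct of an embedding to `L0`. -/
def embRed0 {C D : Bundled.{0} (L0.sum L1).Structure} (e : C ↪[L0.sum L1] D) :
    red0 C ↪[L0] red0 D where
  toFun := e
  inj' := e.injective
  map_fun' := fun f => isEmptyElim f
  map_rel' := fun R x => e.map_rel (Sum.inl R) x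

/-- Reduct of an embedding to `L1`. -/
def embRed1 {C D : Bundled.{0} (L0.sum L1).Structure} (e : C ↪[L0.sum L1] D) :
    red1 C ↪[L1] red1 D where
  toFun := e
  inj' := e.injective
  map_fun' := fun f => isEmptyElim f
  map_rel' := fun R x => e.map_rel (Sum.inr R) x

/-- Glue an `L0`-structure on a subset `X` of `C0` together with an `L1`-structure
pulled back along `φ : X → C1` into an `(L0.sum L1)`-structure on `X`. -/
def glueBundle (C0 : Bundled.{0} L0.Structure) (C1 : Bundled.{0} L1.Structure)
    (X : Set C0) (φ : X → C1) : Bundled.{0} (L0.sum L1).Structure :=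
  ⟨X, { funMap := fun f _ => isEmptyElim f
        RelMap := fun {_} R x =>
          Sum.casesOn R (fun R0 => RelMap R0 fun i => (x i : C0))
            (fun R1 => RelMap R1 fun i => φ (x i)) }⟩

end Stmt3Proof

/-- free superposition preserves disjoint n-amalgamation. -/
theorem stmt3 (L0 : FirstOrder.Language.{u0, v0}) (L1 : FirstOrder.Language.{u1, v1})
    [L0.IsRelational] [L1.IsRelational]
    (K0 : StructClass L0) (K1 : StructClass L1)
    (hfin0 : AllFinite K0) (hiso0 : IsoClosed K0)
    (hfin1 : AllFinite K1) (hiso1 : IsoClosed K1)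
    (hher0 : HereditaryC K0) (hher1 : HereditaryC K1)
    (n : ℕ) (hn : 2 ≤ n)
    (h0 : DisjointNAmalg K0 n) (h1 : DisjointNAmalg K1 n) :
    DisjointNAmalg (freeClass K0 K1) n := by
  intro A f hK hid hcomp hdisj
  -- The L0-side amalgam
  obtain ⟨C0, hC0, g0, hcomm0, hdisj0⟩ :=
    h0 (fun p => red0 (A p)) (fun p q hpq => embRed0 (f p q hpq))
      (fun p => (hK p).2.1)
      (fun p h => by
        apply Embedding.ext; intro x
        exact DFunLike.congr_fun (hid p h) x)
      (fun p q r hpq hqr => by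
        apply Embedding.ext; intro x
        exact DFunLike.congr_fun (hcomp p q r hpq hqr) x)
      (fun p q r hpr hqr => hdisj p q r hpr hqr)
  -- The L1-side amalgam
  obtain ⟨C1, hC1, g1, hcomm1, hdisj1⟩ :=
    h1 (fun p => red1 (A p)) (fun p q hpq => embRed1 (f p q hpq))
      (fun p => (hK p).2.2)
      (fun p h => by
        apply Embedding.ext; intro x
        exact DFunLike.congr_fun (hid p h) x)
      (fun p q r hpq hqr => by
        apply Embedding.ext; intro x
        exact DFunLike.congr_fun (hcomp p q r hpq hqr) x)
      (fun p q r hpr hqr => hdisj p q r hpr hqr)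
  -- Keys: the two amalgams identify the same pairs
  have key01 : ∀ (p q : ProperSub n) (a : A p) (b : A q),
      g0 p a = g0 q b → g1 p a = g1 q b := by
    intro p q a b hab
    have hmem : g0 p a ∈ Set.range ⇑(g0 p) ∩ Set.range ⇑(g0 q) :=
      ⟨⟨a, rfl⟩, ⟨b, hab.symm⟩⟩
    rw [hdisj0 p q] at hmem
    obtain ⟨c, hc⟩ := hmem
    have h1c : (f (interP p q) p Finset.inter_subset_left) c = a := by
      apply (g0 p).injective
      have := DFunLike.congr_fun (hcomm0 (interP p q) p Finset.inter_subset_left) c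
      exact this.trans (hc.trans rfl)
    have h2c : (f (interP p q) q Finset.inter_subset_right) c = b := by
      apply (g0 q).injective
      have := DFunLike.congr_fun (hcomm0 (interP p q) q Finset.inter_subset_right) c
      exact this.trans (hc.trans hab)
    calc g1 p a = g1 p ((f (interP p q) p Finset.inter_subset_left) c) := by rw [h1c]
      _ = g1 (interP p q) c :=
        DFunLike.congr_fun (hcomm1 (interP p q) p Finset.inter_subset_left) c
      _ = g1 q ((f (interP p q) q Finset.inter_subset_right) c) :=
        (DFunLike.congr_fun (hcomm1 (interP p q) q Finset.inter_subset_right) c).symm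
      _ = g1 q b := by rw [h2c]
  have key10 : ∀ (p q : ProperSub n) (a : A p) (b : A q),
      g1 p a = g1 q b → g0 p a = g0 q b := by
    intro p q a b hab
    have hmem : g1 p a ∈ Set.range ⇑(g1 p) ∩ Set.range ⇑(g1 q) :=
      ⟨⟨a, rfl⟩, ⟨b, hab.symm⟩⟩
    rw [hdisj1 p q] at hmem
    obtain ⟨c, hc⟩ := hmem
    have h1c : (f (interP p q) p Finset.inter_subset_left) c = a := by
      apply (g1 p).injective
      have := DFunLike.congr_fun (hcomm1 (interP p q) p Finset.inter_subset_left) c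
      exact this.trans (hc.trans rfl)
    have h2c : (f (interP p q) q Finset.inter_subset_right) c = b := by
      apply (g1 q).injective
      have := DFunLike.congr_fun (hcomm1 (interP p q) q Finset.inter_subset_right) c
      exact this.trans (hc.trans hab)
    calc g0 p a = g0 p ((f (interP p q) p Finset.inter_subset_left) c) := by rw [h1c]
      _ = g0 (interP p q) c :=
        DFunLike.congr_fun (hcomm0 (interP p q) p Finset.inter_subset_left) c
      _ = g0 q ((f (interP p q) q Finset.inter_subset_right) c) :=
        (DFunLike.congr_fun (hcomm0 (interP p q) q Finset.inter_subset_right) c).symm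
      _ = g0 q b := by rw [h2c]
  -- The carrier: union of the images in C0
  set X : Set C0 := ⋃ p : ProperSub n, Set.range ⇑(g0 p) with hX
  have hmemX : ∀ p (a : A p), g0 p a ∈ X :=
    fun p a => Set.mem_iUnion.mpr ⟨p, Set.mem_range_self a⟩
  have hex : ∀ x : X, ∃ (p : ProperSub n) (a : A p), g0 p a = (x : C0) := by
    intro x
    obtain ⟨p, hp⟩ := Set.mem_iUnion.mp x.2
    obtain ⟨a, ha⟩ := hp
    exact ⟨p, a, ha⟩
  choose P aa haa using hex
  set φ : X → C1 := fun x => g1 (P x) (aa x) with hφ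
  have key2 : ∀ p (a : A p) (h : g0 p a ∈ X), φ ⟨g0 p a, h⟩ = g1 p a := by
    intro p a h
    exact key01 _ _ _ _ (haa ⟨g0 p a, h⟩)
  have φinj : Function.Injective φ := by
    intro x y hxy
    apply Subtype.ext
    rw [← haa x, ← haa y]
    exact key10 _ _ _ _ hxy
  set C : Bundled.{0} (L0.sum L1).Structure := glueBundle C0 C1 X φ with hC
  refine ⟨C, ?_, ?_⟩
  · -- membership in the free superposition
    refine ⟨?_, ?_, ?_⟩
    · have : Finite C0 := hfin0 C0 hC0
      exact Subtype.finite
    · exact hiso0 _ (hher0 C0 hC0 X) _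
        ⟨{ toEquiv := Equiv.refl X
           map_fun' := fun F => isEmptyElim F
           map_rel' := fun R x => Iff.rfl }⟩
    · -- L1-reduct: isomorphic to the corresponding subset of C1
      set Y : Set C1 := ⋃ p : ProperSub n, Set.range ⇑(g1 p) with hY
      have hψ : ∀ x : X, φ x ∈ Y := fun x => Set.mem_iUnion.mpr ⟨P x, Set.mem_range_self _⟩
      have hbij : Function.Bijective (fun x : X => (⟨φ x, hψ x⟩ : Y)) := by
        constructor
        · intro x y hxy
          exact φinj (congrArg Subtype.val hxy)
        · rintro ⟨y, hy⟩
          obtain ⟨p, a, ha⟩ : ∃ (p : ProperSub n) (a : A p), g1 p a = y := by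
            obtain ⟨p, hp⟩ := Set.mem_iUnion.mp hy
            obtain ⟨a, ha⟩ := hp
            exact ⟨p, a, ha⟩
          exact ⟨⟨g0 p a, hmemX p a⟩, Subtype.ext ((key2 p a _).trans ha)⟩
      have e : (⟨C, (LHom.sumInr (L := L0) (L' := L1)).reduct C⟩ : Bundled.{0} L1.Structure)
          ≃[L1] (⟨Y, setStructure L1 Y⟩ : Bundled.{0} L1.Structure) :=
        { toEquiv := Equiv.ofBijective _ hbij
          map_fun' := fun F => isEmptyElim F
          map_rel' := fun R x => Iff.rfl }
      exact hiso1 _ (hher1 C1 hC1 Y) _ ⟨e.symm⟩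
  · -- the embeddings
    refine ⟨fun p =>
      { toFun := fun a => ⟨g0 p a, hmemX p a⟩
        inj' := fun a b h => (g0 p).injective (congrArg Subtype.val h)
        map_fun' := fun F => isEmptyElim F
        map_rel' := ?_ }, ?_, ?_⟩
    · intro m R x
      cases R with
      | inl R0 => exact (g0 p).map_rel R0 x
      | inr R1 =>
        have hfun : (fun i => φ ⟨g0 p (x i), hmemX p (x i)⟩) = fun i => g1 p (x i) :=
          funext fun i => key2 p (x i) _
        show RelMap R1 (fun i => φ ⟨g0 p (x i), hmemX p (x i)⟩) ↔ _
        rw [hfun]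
        exact (g1 p).map_rel R1 x
    · intro p q hpq
      apply Embedding.ext
      intro a
      exact Subtype.ext (DFunLike.congr_fun (hcomm0 p q hpq) a)
    · intro p q
      have hr : ∀ (r : ProperSub n) (x : X),
          (x ∈ Set.range fun a : A r => (⟨g0 r a, hmemX r a⟩ : X)) ↔
            (x : C0) ∈ Set.range ⇑(g0 r) := by
        intro r x
        constructor
        · rintro ⟨a, rfl⟩; exact ⟨a, rfl⟩
        · rintro ⟨a, ha⟩; exact ⟨a, Subtype.ext ha⟩
      refine Set.ext fun (x : X) => ?_
      constructor
      · rintro ⟨h1, h2⟩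
        refine (hr _ x).mpr ?_
        have : (x : C0) ∈ Set.range ⇑(g0 p) ∩ Set.range ⇑(g0 q) :=
          ⟨(hr p x).mp h1, (hr q x).mp h2⟩
        rwa [hdisj0 p q] at this
      · intro h
        have h' := (hr _ x).mp h
        have : (x : C0) ∈ Set.range ⇑(g0 p) ∩ Set.range ⇑(g0 q) := by
          rw [hdisj0 p q]; exact h'
        exact ⟨(hr p x).mpr this.1, (hr q x).mpr this.2⟩


end ProductsPaper
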